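/- Let p be a prime with p ≡ 1 (mod 3). Then D_{U(p)^3}(p) ≥ 3; that is, there exists a sequence of length 2 in Z_p (for instance (−1, x) where x ∈ U(p) \ U(p)^3) that has no nonempty subsequence which is a U(p)^3-weighted zero-sum sequence. -/

import Mathlib

/-- A list `L` over `ZMod n` is an `A`-weighted zero-sum sequence if there are weights
`a₁, …, a_k ∈ A` (one per term) with `a₁x₁ + ⋯ + a_kx_k = 0`. -/
def IsWeightedZeroSum {n : ℕ} (A : Set (ZMod n)) (L : List (ZMod n)) : Prop :=
  ∃ a : List (ZMod n), a.length = L.length ∧ (∀ w ∈ a, w ∈ A) ∧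
    (List.zipWith (· * ·) a L).sum = 0

/-- `L` has a nonempty subsequence of consecutive terms which is an
`A`-weighted zero-sum sequence. -/
def HasConsecWZS {n : ℕ} (A : Set (ZMod n)) (L : List (ZMod n)) : Prop :=
  ∃ l₁ l₂ l₃ : List (ZMod n), L = l₁ ++ l₂ ++ l₃ ∧ l₂ ≠ [] ∧ IsWeightedZeroSum A l₂

/-- `L` has a nonempty subsequence (not necessarily of consecutive terms) which is an
`A`-weighted zero-sum sequence. -/
def HasSubWZS {n : ℕ} (A : Set (ZMod n)) (L : List (ZMod n)) : Prop :=
  ∃ l : List (ZMod n), l.Sublist L ∧ l ≠ [] ∧ IsWeightedZeroSum A l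

lemma sublist_pair_cases {α : Type*} {l : List α} {a b : α} (h : l.Sublist [a, b]) :
    l = [] ∨ l = [a] ∨ l = [b] ∨ l = [a, b] := by
  cases h with
  | cons _ h1 =>
    cases h1 with
    | cons _ h2 => left; exact List.sublist_nil.mp h2
    | cons_cons _ h2 => right; right; left; rw [List.sublist_nil.mp h2]
  | cons_cons _ h1 =>
    cases h1 with
    | cons _ h2 => right; left; rw [List.sublist_nil.mp h2]
    | cons_cons _ h2 => right; right; right; rw [List.sublist_nil.mp h2]

/-- For a prime `p ≡ 1 (mod 3)`, `D_{U(p)³}(p) ≥ 3`: there is a sequence of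
length `2` in `Z_p` with no nonempty subsequence that is a `U(p)³`-weighted zero-sum
sequence. -/
theorem D_cubes_ge_three (p : ℕ) (hp : p.Prime) (hmod : p % 3 = 1) :
    ∃ L : List (ZMod p), L.length = 2 ∧
      ¬ HasSubWZS {x : ZMod p | ∃ u : (ZMod p)ˣ, (u : ZMod p) ^ 3 = x} L := by
  haveI : Fact p.Prime := ⟨hp⟩
  -- find a non-cube unit
  have hdvd : (3 : ℕ) ∣ Fintype.card (ZMod p)ˣ := by
    rw [ZMod.card_units_eq_totient, Nat.totient_prime hp]
    omega
  obtain ⟨g, hg⟩ := exists_prime_orderOf_dvd_card 3 hdvd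
  have hg1 : g ≠ 1 := by
    intro h
    rw [h, orderOf_one] at hg
    omega
  have hninj : ¬ Function.Injective (fun u : (ZMod p)ˣ => u ^ 3) := by
    intro hinj
    apply hg1
    apply hinj
    show g ^ 3 = 1 ^ 3
    rw [one_pow, ← hg, pow_orderOf_eq_one]
  have hnsurj : ¬ Function.Surjective (fun u : (ZMod p)ˣ => u ^ 3) := by
    rwa [← Finite.injective_iff_surjective]
  rw [Function.Surjective] at hnsurj
  push_neg at hnsurj
  obtain ⟨x, hx⟩ := hnsurj
  refine ⟨[-1, (x : ZMod p)], rfl, ?_⟩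
  rintro ⟨l, hsub, hne, a, hlen, hmem, hsum⟩
  rcases sublist_pair_cases hsub with rfl | rfl | rfl | rfl
  · exact hne rfl
  · -- l = [-1]
    obtain ⟨w, rfl⟩ := List.length_eq_one_iff.mp hlen
    obtain ⟨v, hv⟩ := hmem w (by simp)
    simp only [List.zipWith, List.sum_cons, List.sum_nil, add_zero] at hsum
    have : w ≠ 0 := by rw [← hv]; exact pow_ne_zero _ v.ne_zero
    rw [mul_neg, mul_one, neg_eq_zero] at hsum
    exact this hsum
  · -- l = [x]
    obtain ⟨w, rfl⟩ := List.length_eq_one_iff.mp hlen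
    obtain ⟨v, hv⟩ := hmem w (by simp)
    simp only [List.zipWith, List.sum_cons, List.sum_nil, add_zero] at hsum
    have hw : w ≠ 0 := by rw [← hv]; exact pow_ne_zero _ v.ne_zero
    exact x.ne_zero ((mul_eq_zero.mp hsum).resolve_left hw)
  · -- l = [-1, x]
    obtain ⟨w₁, w₂, rfl⟩ := List.length_eq_two.mp hlen
    obtain ⟨v₁, hv₁⟩ := hmem w₁ (by simp)
    obtain ⟨v₂, hv₂⟩ := hmem w₂ (by simp)
    simp only [List.zipWith, List.sum_cons, List.sum_nil, add_zero] at hsum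
    apply hx (v₂⁻¹ * v₁)
    have h2 : ((v₂ : ZMod p)) ^ 3 * (x : ZMod p) = ((v₁ : ZMod p)) ^ 3 := by
      rw [hv₁, hv₂]
      rw [mul_neg, mul_one] at hsum
      linear_combination hsum
    apply Units.ext
    have hv2ne : ((v₂ : ZMod p)) ≠ 0 := v₂.ne_zero
    push_cast
    field_simp
    linear_combination -h2
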